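/- For all n ≥ 1, the chromatic number of the parity-constrained Hanoi graph P^n equals 3. -/

import Mathlib

/-- Parity constraint on a state: disc `d+1` (labelled `1,…,n`) may not sit on
peg `2` if it is even, nor on peg `1` if it is odd. -/
def pegOK (n : ℕ) (s : Fin n → Fin 4) : Prop :=
  ∀ d : Fin n, (Even ((d : ℕ) + 1) → s d ≠ 2) ∧ (Odd ((d : ℕ) + 1) → s d ≠ 1)

instance (n : ℕ) : DecidablePred (pegOK n) := fun s => by
  unfold pegOK; infer_instance

/-- Vertices of the parity-constrained Hanoi graph `P^n`. -/
abbrev PVertex (n : ℕ) := {s : Fin n → Fin 4 // pegOK n s}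

/-- The parity-constrained four-peg Hanoi graph `P^n`: two states are adjacent iff
they differ in exactly one coordinate `d` (a legal move of disc `d+1`) and no
smaller disc sits on either of the two pegs involved. -/
def PGraph (n : ℕ) : SimpleGraph (PVertex n) where
  Adj s t := ∃ d : Fin n,
    s.1 d ≠ t.1 d ∧ (∀ k, k ≠ d → s.1 k = t.1 k) ∧
    (∀ k, k < d → s.1 k ≠ s.1 d ∧ s.1 k ≠ t.1 d)
  symm := by
    constructor
    rintro s t ⟨d, hne, heq, hlt⟩
    refine ⟨d, hne.symm, fun k hk => (heq k hk).symm, fun k hk => ?_⟩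
    have h := hlt k hk
    rw [← heq k (ne_of_lt hk)]
    exact ⟨h.2, h.1⟩
  loopless := by constructor; rintro s ⟨d, hne, -⟩; exact hne rfl

instance (n : ℕ) : DecidableRel (PGraph n).Adj := fun s t =>
  decidable_of_iff (∃ d : Fin n,
    s.1 d ≠ t.1 d ∧ (∀ k, k ≠ d → s.1 k = t.1 k) ∧
    (∀ k, k < d → s.1 k ≠ s.1 d ∧ s.1 k ≠ t.1 d)) Iff.rfl

/-- The value of a disc at index `d` (label `d+1`) on peg `p`, in `ZMod 3`.
For `d` even (odd disc, pegs `{0,2,3}`) and `d` odd (even disc, pegs `{0,1,3}`),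
the map is injective on the allowed pegs. -/
def pv (d : ℕ) (p : Fin 4) : ZMod 3 :=
  if d % 2 = 0 then
    (match p with | 0 => 0 | 1 => 0 | 2 => 1 | 3 => 2)
  else
    (match p with | 0 => 0 | 1 => 1 | 2 => 0 | 3 => 2)

lemma pv_inj (d : ℕ) (p q : Fin 4)
    (hp2 : d % 2 = 1 → p ≠ 2) (hq2 : d % 2 = 1 → q ≠ 2)
    (hp1 : d % 2 = 0 → p ≠ 1) (hq1 : d % 2 = 0 → q ≠ 1)
    (hne : p ≠ q) : pv d p ≠ pv d q := by
  rcases Nat.mod_two_eq_zero_or_one d with h | h <;>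
    simp only [pv, h] <;> fin_cases p <;> fin_cases q <;> simp_all <;> decide

/-- The 3-coloring of `P^n`. -/
def pcolor (n : ℕ) (s : PVertex n) : ZMod 3 := ∑ d : Fin n, pv (d : ℕ) (s.1 d)

lemma parity_even (d : ℕ) : Even (d + 1) ↔ d % 2 = 1 := by
  rw [Nat.even_add_one, Nat.not_even_iff]

lemma parity_odd (d : ℕ) : Odd (d + 1) ↔ d % 2 = 0 := by
  rw [Nat.odd_add_one, Nat.not_odd_iff_even, Nat.even_iff]

lemma pcolor_valid (n : ℕ) : ∀ {s t : PVertex n},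
    (PGraph n).Adj s t → pcolor n s ≠ pcolor n t := by
  rintro s t ⟨d, hne, heq, -⟩ hcol
  have hs := s.2 d
  have ht := t.2 d
  have hd : pv (d : ℕ) (s.1 d) ≠ pv (d : ℕ) (t.1 d) := by
    refine pv_inj _ _ _ ?_ ?_ ?_ ?_ hne
    · exact fun h => hs.1 ((parity_even d).mpr h)
    · exact fun h => ht.1 ((parity_even d).mpr h)
    · exact fun h => hs.2 ((parity_odd d).mpr h)
    · exact fun h => ht.2 ((parity_odd d).mpr h)
  apply hd
  have hrest : ∑ k ∈ Finset.univ.erase d, pv (k : ℕ) (s.1 k)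
      = ∑ k ∈ Finset.univ.erase d, pv (k : ℕ) (t.1 k) :=
    Finset.sum_congr rfl fun k hk => by
      rw [heq k (Finset.ne_of_mem_erase hk)]
  have h1 := Finset.add_sum_erase Finset.univ (fun k : Fin n => pv (k : ℕ) (s.1 k))
    (Finset.mem_univ d)
  have h2 := Finset.add_sum_erase Finset.univ (fun k : Fin n => pv (k : ℕ) (t.1 k))
    (Finset.mem_univ d)
  have : pcolor n s = pcolor n t := hcol
  rw [pcolor, pcolor, ← h1, ← h2, hrest] at this
  exact add_right_cancel this

/-- A basic vertex: disc 1 on peg `a` (with `a ≠ 1`), all other discs on peg 0. -/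
def baseV (n : ℕ) (hn : 1 ≤ n) (a : Fin 4) (ha : a ≠ 1) : PVertex n :=
  ⟨fun k => if k = ⟨0, hn⟩ then a else 0, by
    intro d
    by_cases h : d = ⟨0, hn⟩
    · subst h
      simp only [if_pos rfl]
      constructor
      · intro he; exact absurd ((parity_even 0).mp he) (by decide)
      · intro _; exact ha
    · simp only [if_neg h]
      exact ⟨fun _ => by decide, fun _ => by decide⟩⟩

lemma baseV_adj (n : ℕ) (hn : 1 ≤ n) (a b : Fin 4) (ha : a ≠ 1) (hb : b ≠ 1)
    (hab : a ≠ b) : (PGraph n).Adj (baseV n hn a ha) (baseV n hn b hb) := by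
  refine ⟨⟨0, hn⟩, ?_, ?_, ?_⟩
  · simpa [baseV] using hab
  · intro k hk; simp [baseV, if_neg hk]
  · intro k hk
    exact absurd hk (by simp [Fin.lt_def])

/-- The chromatic number of the parity-constrained Hanoi graph `P^n` is `3`. -/
theorem stmt17 : ∀ n : ℕ, 1 ≤ n → (PGraph n).chromaticNumber = 3 := by
  intro n hn
  refine le_antisymm ?_ ?_
  · have C : (PGraph n).Coloring (ZMod 3) :=
      SimpleGraph.Coloring.mk (pcolor n) (fun h => pcolor_valid n h)
    have := C.colorable.chromaticNumber_le
    simpa using this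
  · classical
    set v0 := baseV n hn 0 (by decide)
    set v2 := baseV n hn 2 (by decide)
    set v3 := baseV n hn 3 (by decide)
    have hne : ∀ (a b : Fin 4) (ha : a ≠ 1) (hb : b ≠ 1), a ≠ b →
        baseV n hn a ha ≠ baseV n hn b hb := by
      intro a b ha hb hab h
      apply hab
      have := congrArg (fun (v : PVertex n) => v.1 ⟨0, hn⟩) h
      simpa [baseV] using this
    have hclique : (PGraph n).IsClique ({v0, v2, v3} : Finset (PVertex n)) := by
      intro x hx y hy hxy
      simp only [Finset.coe_insert, Set.mem_insert_iff, Finset.coe_singleton,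
        Set.mem_singleton_iff] at hx hy
      rcases hx with rfl | rfl | rfl <;> rcases hy with rfl | rfl | rfl <;>
        first
        | exact absurd rfl hxy
        | exact baseV_adj n hn _ _ _ _ (by decide)
        | exact ((PGraph n).symm (baseV_adj n hn _ _ _ _ (by decide)))
    have hcard : ({v0, v2, v3} : Finset (PVertex n)).card = 3 := by
      rw [Finset.card_insert_of_notMem, Finset.card_insert_of_notMem,
        Finset.card_singleton]
      · simp only [Finset.mem_singleton]
        exact hne 2 3 (by decide) (by decide) (by decide)
      · simp only [Finset.mem_insert, Finset.mem_singleton]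
        push_neg
        exact ⟨hne 0 2 (by decide) (by decide) (by decide),
          hne 0 3 (by decide) (by decide) (by decide)⟩
    have := hclique.card_le_chromaticNumber
    rw [hcard] at this
    exact_mod_cast this
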